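/- arXiv:1701.05954 — 2 statements merged into one kernel-verified Lean document; each statement's English description precedes it below -/
import Mathlib

section
/- For a matrix B with equal row sums, τ(B) := sup{ ‖v'B‖₁ : v'e = 0, ‖v‖₁ = 1 } equals (1/2) max_{i,j} Σ_s |B_{is} − B_{js}|. -/
open Finset

/-- Upper bound: for any admissible `v`, `‖v'B‖₁ ≤ M/2` where `M` bounds all
row-difference `ℓ₁` norms. -/
lemma ergodic_upper {n : Type*} [Fintype n] (B : Matrix n n ℝ) (M : ℝ)
    (hM : ∀ i k : n, ∑ s, |B i s - B k s| ≤ M)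
    (v : n → ℝ) (h0 : ∑ i, v i = 0) (h1 : ∑ i, |v i| = 1) :
    ∑ j, |∑ i, v i * B i j| ≤ M / 2 := by
  classical
  set p : n → ℝ := fun i => max (v i) 0 with hpdef
  set m : n → ℝ := fun i => max (-v i) 0 with hmdef
  have hpnn : ∀ i, 0 ≤ p i := fun i => le_max_right _ _
  have hmnn : ∀ i, 0 ≤ m i := fun i => le_max_right _ _
  have hv : ∀ i, p i - m i = v i := fun i => max_zero_sub_max_neg_zero_eq_self (v i)
  have hav : ∀ i, p i + m i = |v i| := fun i => max_zero_add_max_neg_zero_eq_abs_self (v i)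
  have hsub : ∑ i, p i - ∑ i, m i = 0 := by
    rw [← Finset.sum_sub_distrib]; simp only [hv]; exact h0
  have hadd : ∑ i, p i + ∑ i, m i = 1 := by
    rw [← Finset.sum_add_distrib]; simp only [hav]; exact h1
  have hp : ∑ i, p i = 1 / 2 := by linarith
  have hm : ∑ i, m i = 1 / 2 := by linarith
  have hexp : ∀ j, ∑ i, ∑ k, p i * m k * (B i j - B k j)
      = (∑ i, p i * B i j) * (∑ k, m k) - (∑ i, p i) * (∑ k, m k * B k j) := by
    intro j
    rw [Finset.sum_mul, Finset.sum_mul, ← Finset.sum_sub_distrib]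
    refine Finset.sum_congr rfl fun i _ => ?_
    rw [Finset.mul_sum, Finset.mul_sum, ← Finset.sum_sub_distrib]
    refine Finset.sum_congr rfl fun k _ => ?_
    ring
  have hkey : ∀ j, ∑ i, v i * B i j = 2 * ∑ i, ∑ k, p i * m k * (B i j - B k j) := by
    intro j
    rw [hexp j, hp, hm]
    have : ∑ i, v i * B i j = ∑ i, (p i * B i j - m i * B i j) := by
      refine Finset.sum_congr rfl fun i _ => ?_
      rw [← hv i]; ring
    rw [this, Finset.sum_sub_distrib]; ring
  calc ∑ j, |∑ i, v i * B i j|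
      = ∑ j, 2 * |∑ i, ∑ k, p i * m k * (B i j - B k j)| := by
        refine Finset.sum_congr rfl fun j _ => ?_
        rw [hkey j, abs_mul]; norm_num
    _ ≤ ∑ j, 2 * ∑ i, ∑ k, p i * m k * |B i j - B k j| := by
        refine Finset.sum_le_sum fun j _ => ?_
        have h2 : |∑ i, ∑ k, p i * m k * (B i j - B k j)|
            ≤ ∑ i, ∑ k, p i * m k * |B i j - B k j| := by
          refine (Finset.abs_sum_le_sum_abs _ _).trans ?_
          refine Finset.sum_le_sum fun i _ => ?_
          refine (Finset.abs_sum_le_sum_abs _ _).trans ?_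
          refine Finset.sum_le_sum fun k _ => ?_
          rw [abs_mul, abs_of_nonneg (mul_nonneg (hpnn i) (hmnn k))]
        linarith
    _ = 2 * ∑ i, ∑ k, p i * m k * ∑ j, |B i j - B k j| := by
        rw [← Finset.mul_sum]
        congr 1
        rw [Finset.sum_comm]
        refine Finset.sum_congr rfl fun i _ => ?_
        rw [Finset.sum_comm]
        refine Finset.sum_congr rfl fun k _ => ?_
        rw [Finset.mul_sum]
    _ ≤ 2 * ∑ i, ∑ k, p i * m k * M := by
        have h3 : ∀ i ∈ (univ : Finset n), ∑ k, p i * m k * ∑ j, |B i j - B k j|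
            ≤ ∑ k, p i * m k * M := by
          intro i _
          refine Finset.sum_le_sum fun k _ => ?_
          exact mul_le_mul_of_nonneg_left (hM i k) (mul_nonneg (hpnn i) (hmnn k))
        have := Finset.sum_le_sum h3
        linarith
    _ = M / 2 := by
        have : ∑ i, ∑ k, p i * m k * M = (∑ i, p i) * (∑ k, m k) * M := by
          simp only [← Finset.sum_mul]
          congr 1
          exact (Finset.sum_mul_sum univ univ p m).symm
        rw [this, hp, hm]; ring

/-- Variational characterization of the ergodic coefficient: for a matrix `B`
with equal row sums, `sup{‖v'B‖₁ : v'e = 0, ‖v‖₁ = 1}` equals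
`(1/2) max_{i,j} Σ_s |B_{is} − B_{js}|`. -/
theorem ergodic_coefficient_eq
    {n : Type*} [Fintype n] [Nonempty n]
    (B : Matrix n n ℝ)
    (hrows : ∃ c : ℝ, ∀ i, ∑ j, B i j = c) :
    sSup {r : ℝ | ∃ v : n → ℝ, (∑ i, v i = 0) ∧ (∑ i, |v i| = 1) ∧
        r = ∑ j, |∑ i, v i * B i j|}
      = (1 / 2 : ℝ) * (⨆ p : n × n, ∑ s, |B p.1 s - B p.2 s|) := by
  classical
  set f : n × n → ℝ := fun p => ∑ s, |B p.1 s - B p.2 s| with hf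
  have hbdd : BddAbove (Set.range f) := (Set.finite_range f).bddAbove
  set M : ℝ := ⨆ p : n × n, f p with hMdef
  have hfM : ∀ p, f p ≤ M := fun p => le_ciSup hbdd p
  have hfnn : ∀ p : n × n, 0 ≤ f p := fun p =>
    Finset.sum_nonneg fun s _ => abs_nonneg _
  have hM0 : 0 ≤ M := le_trans (hfnn (Classical.arbitrary _)) (hfM _)
  have hub : ∀ r ∈ {r : ℝ | ∃ v : n → ℝ, (∑ i, v i = 0) ∧ (∑ i, |v i| = 1) ∧
      r = ∑ j, |∑ i, v i * B i j|}, r ≤ (1/2 : ℝ) * M := by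
    rintro r ⟨v, h0, h1, rfl⟩
    have := ergodic_upper B M (fun i k => hfM (i, k)) v h0 h1
    linarith
  rcases subsingleton_or_nontrivial n with hs | hs
  · -- subsingleton: set is empty, M = 0
    have hM : M = 0 := by
      have : f = fun _ => 0 := by
        funext p
        have : p.1 = p.2 := Subsingleton.elim _ _
        simp [hf, this]
      rw [hMdef, this, ciSup_const]
    have hempty : {r : ℝ | ∃ v : n → ℝ, (∑ i, v i = 0) ∧ (∑ i, |v i| = 1) ∧
        r = ∑ j, |∑ i, v i * B i j|} = ∅ := by
      ext r
      simp only [Set.mem_setOf_eq, Set.mem_empty_iff_false, iff_false]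
      rintro ⟨v, h0, h1, _⟩
      have a : n := Classical.arbitrary n
      have hall : ∀ i : n, v i = v a := fun i => by rw [Subsingleton.elim i a]
      have hc : Fintype.card n = 1 := by
        have h1' := Fintype.card_le_one_iff_subsingleton.mpr hs
        have h2' := Fintype.card_pos (α := n)
        omega
      have e0 : ∑ i, v i = (Fintype.card n : ℝ) * v a := by
        rw [Finset.sum_congr rfl fun i _ => hall i]
        simp [Finset.card_univ, mul_comm]
      have e1 : ∑ i, |v i| = (Fintype.card n : ℝ) * |v a| := by
        rw [Finset.sum_congr rfl fun i _ => congrArg abs (hall i)]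
        simp [Finset.card_univ, mul_comm]
      rw [e0, hc] at h0
      rw [e1, hc] at h1
      simp at h0 h1
      rw [h0] at h1
      simp at h1
    rw [hempty, Real.sSup_empty, hM, mul_zero]
  · -- nontrivial: maximum attained at some off-diagonal pair
    obtain ⟨p₀, hp₀⟩ := Finite.exists_max f
    have hMeq : M = f p₀ := le_antisymm (ciSup_le hp₀) (hfM p₀)
    obtain ⟨i, j, hij, hfij⟩ : ∃ i j : n, i ≠ j ∧ f (i, j) = M := by
      rcases eq_or_ne p₀.1 p₀.2 with h | h
      · obtain ⟨a, b, hab⟩ := Nontrivial.exists_pair_ne (α := n)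
        refine ⟨a, b, hab, le_antisymm (hfM _) ?_⟩
        have : f p₀ = 0 := by simp [hf, h]
        rw [hMeq, this]; exact hfnn _
      · exact ⟨p₀.1, p₀.2, h, by rw [← hMeq]⟩
    set v : n → ℝ := fun k => (if k = i then (1:ℝ) else 0) / 2
        - (if k = j then (1:ℝ) else 0) / 2 with hvdef
    have h0 : ∑ k, v k = 0 := by
      simp [hvdef, Finset.sum_sub_distrib, ← Finset.sum_div, Finset.sum_ite_eq']
    have h1 : ∑ k, |v k| = 1 := by
      have : ∀ k, |v k| = (if k = i then (1:ℝ) else 0) / 2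
          + (if k = j then (1:ℝ) else 0) / 2 := by
        intro k
        by_cases hki : k = i
        · have hkj : k ≠ j := fun h => hij (hki ▸ h)
          simp [hvdef, hki, hkj, hij, Ne.symm hij] <;> norm_num
        · by_cases hkj : k = j
          · simp [hvdef, hki, hkj, hij, Ne.symm hij] <;> norm_num
          · simp [hvdef, hki, hkj]
      rw [Finset.sum_congr rfl fun k _ => this k]
      simp [Finset.sum_add_distrib, ← Finset.sum_div, Finset.sum_ite_eq']
      norm_num
    have hval : ∑ s, |∑ k, v k * B k s| = (1/2 : ℝ) * M := by
      have hrow : ∀ s, ∑ k, v k * B k s = (B i s - B j s) / 2 := by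
        intro s
        have : ∀ k, v k * B k s = (if k = i then B k s else 0) / 2
            - (if k = j then B k s else 0) / 2 := by
          intro k
          by_cases hki : k = i
          · have hkj : k ≠ j := fun h => hij (hki ▸ h)
            simp [hvdef, hki, hkj, hij, Ne.symm hij]
            ring
          · by_cases hkj : k = j
            · simp [hvdef, hki, hkj, hij, Ne.symm hij]; ring
            · simp [hvdef, hki, hkj]
        rw [Finset.sum_congr rfl fun k _ => this k]
        rw [Finset.sum_sub_distrib]
        rw [← Finset.sum_div, ← Finset.sum_div, Finset.sum_ite_eq', Finset.sum_ite_eq']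
        simp [sub_div]
      rw [Finset.sum_congr rfl fun s _ => congrArg abs (hrow s)]
      rw [← hfij]
      simp only [hf]
      rw [Finset.mul_sum]
      refine Finset.sum_congr rfl fun s _ => ?_
      rw [abs_div, abs_two]
      ring
    have hmem : (1/2 : ℝ) * M ∈ {r : ℝ | ∃ v : n → ℝ, (∑ i, v i = 0) ∧ (∑ i, |v i| = 1) ∧
        r = ∑ j, |∑ i, v i * B i j|} := ⟨v, h0, h1, hval.symm⟩
    exact le_antisymm (Real.sSup_le hub (by linarith)) (le_csSup ⟨(1/2 : ℝ) * M, hub⟩ hmem)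
end

section
/- Let π₁, π₂ be the unique stationary distributions of stochastic matrices P₁, P₂ on a finite state space, E = P₁ − P₂, and Z₂ = (I − P₂ + e·π₂')⁻¹ the fundamental matrix of P₂. Then ‖π₁ − π₂‖₁ ≤ ‖π₁'E‖₁ · ‖Z₂‖₁, where ‖Z₂‖₁ denotes the matrix norm induced by the ℓ₁ vector norm (acting on the left as row vectors). -/
open Finset Matrix

lemma l1_vecMul_le {n : Type*} [Fintype n] [Nonempty n] (v : n → ℝ) (M : Matrix n n ℝ) :
    (∑ j, |Matrix.vecMul v M j|) ≤ (∑ i, |v i|) * (⨆ i, ∑ j, |M i j|) := by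
  set S := ⨆ i, ∑ j, |M i j| with hSdef
  have hS : ∀ i, ∑ j, |M i j| ≤ S :=
    fun i => le_ciSup (f := fun i => ∑ j, |M i j|) (Set.Finite.bddAbove (Set.finite_range _)) i
  calc (∑ j, |Matrix.vecMul v M j|) ≤ ∑ j, ∑ i, |v i| * |M i j| := by
        refine Finset.sum_le_sum fun j _ => ?_
        simpa [Matrix.vecMul, dotProduct, abs_mul] using
          Finset.abs_sum_le_sum_abs (fun i => v i * M i j) Finset.univ
    _ = ∑ i, |v i| * ∑ j, |M i j| := by
        rw [Finset.sum_comm]; simp [Finset.mul_sum]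
    _ ≤ ∑ i, |v i| * S := Finset.sum_le_sum fun i _ =>
        mul_le_mul_of_nonneg_left (hS i) (abs_nonneg _)
    _ = (∑ i, |v i|) * S := by rw [Finset.sum_mul]

/-- Perturbation bound for stationary distributions:
`‖π₁ − π₂‖₁ ≤ ‖π₁'E‖₁ · ‖Z₂‖₁` with `E = P₁ − P₂` and
`Z₂ = (I − P₂ + e π₂')⁻¹`, where `‖Z₂‖₁` is the norm induced by the ℓ₁ vector
norm acting on the left by row vectors (the maximum row ℓ₁ sum). -/
theorem stationary_perturbation_bound
    {n : Type*} [Fintype n] [DecidableEq n] [Nonempty n]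
    (P₁ P₂ : Matrix n n ℝ)
    (hP₁0 : ∀ i j, 0 ≤ P₁ i j) (hP₁1 : ∀ i, ∑ j, P₁ i j = 1)
    (hP₂0 : ∀ i j, 0 ≤ P₂ i j) (hP₂1 : ∀ i, ∑ j, P₂ i j = 1)
    (π₁ π₂ : n → ℝ)
    (hπ₁0 : ∀ i, 0 ≤ π₁ i) (hπ₁1 : ∑ i, π₁ i = 1)
    (hπ₂0 : ∀ i, 0 ≤ π₂ i) (hπ₂1 : ∑ i, π₂ i = 1)
    (hstat₁ : Matrix.vecMul π₁ P₁ = π₁)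
    (hstat₂ : Matrix.vecMul π₂ P₂ = π₂)
    (huniq₁ : ∀ μ : n → ℝ, (∀ i, 0 ≤ μ i) → (∑ i, μ i = 1) →
      Matrix.vecMul μ P₁ = μ → μ = π₁)
    (huniq₂ : ∀ μ : n → ℝ, (∀ i, 0 ≤ μ i) → (∑ i, μ i = 1) →
      Matrix.vecMul μ P₂ = μ → μ = π₂)
    (hinv : IsUnit (1 - P₂ + Matrix.vecMulVec (fun _ => (1 : ℝ)) π₂).det) :
    (∑ i, |π₁ i - π₂ i|) ≤
      (∑ j, |∑ i, π₁ i * (P₁ - P₂) i j|) *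
        (⨆ i, ∑ j, |((1 - P₂ + Matrix.vecMulVec (fun _ => (1 : ℝ)) π₂)⁻¹ : Matrix n n ℝ) i j|) := by
  set A := 1 - P₂ + Matrix.vecMulVec (fun _ => (1 : ℝ)) π₂ with hA
  -- key algebraic identity: (π₁ - π₂) A = π₁ (P₁ - P₂)
  have hkey : Matrix.vecMul (π₁ - π₂) A = Matrix.vecMul π₁ (P₁ - P₂) := by
    funext j
    simp only [hA, Matrix.vecMul, dotProduct, Matrix.add_apply, Matrix.sub_apply,
      Matrix.one_apply, Matrix.vecMulVec_apply, Pi.sub_apply, Matrix.sub_apply] at *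
    have h1 := congrFun hstat₁ j
    have h2 := congrFun hstat₂ j
    simp only [Matrix.vecMul, dotProduct] at h1 h2
    have e1 : ∑ i, (π₁ i - π₂ i) * ((if i = j then (1:ℝ) else 0) - P₂ i j + 1 * π₂ j)
        = ∑ i, ((π₁ i - π₂ i) * (if i = j then (1:ℝ) else 0)
            - (π₁ i - π₂ i) * P₂ i j + (π₁ i - π₂ i) * π₂ j) := by
      apply Finset.sum_congr rfl; intro i _; ring
    rw [e1]
    rw [Finset.sum_add_distrib, Finset.sum_sub_distrib]
    have e2 : ∑ i, (π₁ i - π₂ i) * (if i = j then (1:ℝ) else 0) = π₁ j - π₂ j := by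
      simp [mul_ite]
    have e3 : ∑ i, (π₁ i - π₂ i) * π₂ j = 0 := by
      rw [← Finset.sum_mul]
      simp [Finset.sum_sub_distrib, hπ₁1, hπ₂1]
    have e4 : ∑ i, (π₁ i - π₂ i) * P₂ i j = (∑ i, π₁ i * P₂ i j) - π₂ j := by
      simp [sub_mul, Finset.sum_sub_distrib, h2]
    rw [e2, e3, e4]
    have e5 : ∑ i, π₁ i * (P₁ i j - P₂ i j) = π₁ j - ∑ i, π₁ i * P₂ i j := by
      simp [mul_sub, Finset.sum_sub_distrib, h1]
    rw [e5]; ring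
  have hd : π₁ - π₂ = Matrix.vecMul (Matrix.vecMul π₁ (P₁ - P₂)) A⁻¹ := by
    rw [← hkey, Matrix.vecMul_vecMul, Matrix.mul_nonsing_inv A hinv, Matrix.vecMul_one]
  have := l1_vecMul_le (Matrix.vecMul π₁ (P₁ - P₂)) A⁻¹
  calc (∑ i, |π₁ i - π₂ i|) = ∑ i, |(π₁ - π₂) i| := by simp
    _ = ∑ j, |Matrix.vecMul (Matrix.vecMul π₁ (P₁ - P₂)) A⁻¹ j| := by rw [hd]
    _ ≤ (∑ i, |Matrix.vecMul π₁ (P₁ - P₂) i|) * (⨆ i, ∑ j, |A⁻¹ i j|) := this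
    _ = (∑ j, |∑ i, π₁ i * (P₁ - P₂) i j|) * (⨆ i, ∑ j, |A⁻¹ i j|) := by
        simp [Matrix.vecMul, dotProduct]
end
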